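/- arXiv:math/0605390 — 2 statements merged into one kernel-verified Lean document; each statement's English description precedes it below -/
import Mathlib

section
/- Let P_n be the matrix obtained from M_n by deleting its last row and first column. Then det P_n / det P_{n−1} = (−1)^{n−1} a x^{n−1} [n]_{t,u} Π_{i=1}^{n−1}(1 − a x^i [n−i]_{x,y}), and consequently det P_n = (−1)^{binom(n,2)} a^n x^{binom(n,2)} [n]_{t,u}! Π_{m=1}^{n−1} Π_{i=1}^{m}(1 − a x^i [m−i+1]_{x,y}). -/
noncomputable section

/-- `Nsz n = (n+1)(n+2)/2`, the size of the matrix `M_n`. -/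
def Nsz : ℕ → ℕ
  | 0 => 1
  | n + 1 => Nsz n + (n + 2)

theorem Nsz_pos (n : ℕ) : 0 < Nsz n := by
  cases n <;> simp [Nsz]

/-- The coefficient ring `ℚ[a,x,y,t,u]`. -/
abbrev R5 : Type := MvPolynomial (Fin 5) ℚ

def av : R5 := MvPolynomial.X 0
def xv : R5 := MvPolynomial.X 1
def yv : R5 := MvPolynomial.X 2
def tv : R5 := MvPolynomial.X 3
def uv : R5 := MvPolynomial.X 4

/-- The two-parameter integer `[m]_{x,y} = ∑_{j=0}^{m-1} x^j y^{m-1-j}` (with `[0] = 0`). -/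
def pqint (x y : R5) (m : ℕ) : R5 := ∑ j ∈ Finset.range m, x ^ j * y ^ (m - 1 - j)

/-- The lower-right block `M̂_n` of `M_{n+1}`: the `(n+2)×(n+2)` matrix with (1-based)
entries `δ_{ij} - a x^{i-1} [(n+2)-i]_{x,y} (δ_{ij} + δ_{i+1,j})`. -/
def Mhat (n : ℕ) : Matrix (Fin (n + 2)) (Fin (n + 2)) R5 := fun i j =>
  (if (i : ℕ) = (j : ℕ) then 1 else 0) -
    av * xv ^ (i : ℕ) * pqint xv yv (n + 1 - (i : ℕ)) *
      ((if (i : ℕ) = (j : ℕ) then 1 else 0) + (if (i : ℕ) + 1 = (j : ℕ) then 1 else 0))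

/-- The upper-right block `M̄_n` of `M_{n+1}`: only its last `n+1` rows are nonzero, and
those form the `(n+1)×(n+2)` matrix with (1-based) entries
`-a x^{i-1} y^{(n+1)-i} [n+1]_{t,u} (δ_{ij} + δ_{i+1,j})`. -/
def Mbar (n : ℕ) : Matrix (Fin (Nsz n)) (Fin (n + 2)) R5 := fun r j =>
  if Nsz n ≤ (r : ℕ) + (n + 1) then
    -av * xv ^ ((r : ℕ) - (Nsz n - (n + 1))) * yv ^ (n - ((r : ℕ) - (Nsz n - (n + 1)))) *
      pqint tv uv (n + 1) *
      ((if (r : ℕ) - (Nsz n - (n + 1)) = (j : ℕ) then 1 else 0) +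
        (if (r : ℕ) - (Nsz n - (n + 1)) + 1 = (j : ℕ) then 1 else 0))
  else 0

/-- The recursively defined matrix `M_n`. -/
def Mmat : (n : ℕ) → Matrix (Fin (Nsz n)) (Fin (Nsz n)) R5
  | 0 => fun _ _ => 1
  | n + 1 => fun p q =>
      Matrix.fromBlocks (Mmat n) (Mbar n) 0 (Mhat n)
        (finSumFinEquiv.symm p) (finSumFinEquiv.symm q)

/-- `P_n`: the matrix `M_n` with its last row and first column deleted. -/
def Pmat (n : ℕ) : Matrix (Fin (Nsz n - 1)) (Fin (Nsz n - 1)) R5 := fun i j =>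
  Mmat n ⟨(i : ℕ), lt_of_lt_of_le i.isLt (Nat.sub_le _ _)⟩
    ⟨(j : ℕ) + 1, by have := j.isLt; have := Nsz_pos n; omega⟩

/-- The `(t,u)`-factorial `[n]_{t,u}!`. -/
def tufact (n : ℕ) : R5 := ∏ j ∈ Finset.Icc 1 n, pqint tv uv j

namespace S16
open Finset

def pqa (m : ℕ) : R5 := pqint xv yv m
def pqt (m : ℕ) : R5 := pqint tv uv m
def cp (n i : ℕ) : R5 := av * xv ^ i * pqa (n - i)
def Bb : ℕ → ℕ → R5
  | _, 0 => 1
  | 0, _ + 1 => 0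
  | n + 1, k + 1 => xv ^ (k + 1) * Bb n (k + 1) + yv ^ (n - k) * Bb n k

theorem pqa_zero : pqa 0 = 0 := by simp [pqa, pqint]

theorem pq_split (x y : R5) (j d : ℕ) :
    pqint x y (j + d) = x ^ j * pqint x y d + y ^ d * pqint x y j := by
  unfold pqint
  rw [← Finset.sum_range_add_sum_Ico _ (Nat.le_add_right j d), Finset.sum_Ico_eq_sum_range]
  simp only [Nat.add_sub_cancel_left, Finset.mul_sum]
  rw [add_comm]
  congr 1
  · apply Finset.sum_congr rfl
    intro i hi
    have hi' := Finset.mem_range.mp hi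
    have h2 : j + d - 1 - (j + i) = d - 1 - i := by omega
    rw [h2, pow_add, mul_assoc]
  · apply Finset.sum_congr rfl
    intro i hi
    have hi' := Finset.mem_range.mp hi
    have : j + d - 1 - i = (j - 1 - i) + d := by omega
    rw [this, pow_add]
    ring


theorem Bb_zero_left (k : ℕ) : Bb 0 (k+1) = 0 := rfl

theorem Bb_zero' : ∀ n k : ℕ, n < k → Bb n k = 0 := by
  intro n
  induction n with
  | zero => intro k hk; match k, hk with
            | k+1, _ => rfl
  | succ n ih =>
      intro k hk
      match k, hk with
      | k+1, hk =>
        show xv ^ (k + 1) * Bb n (k + 1) + yv ^ (n - k) * Bb n k = 0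
        rw [ih (k+1) (by omega), ih k (by omega)]
        ring

theorem Bb_diag : ∀ n : ℕ, Bb n n = 1 := by
  intro n
  induction n with
  | zero => rfl
  | succ n ih =>
      show xv ^ (n + 1) * Bb n (n + 1) + yv ^ (n - n) * Bb n n = 1
      rw [Bb_zero' n (n+1) (by omega), ih]
      simp

theorem Bb_zero_right (n : ℕ) : Bb n 0 = 1 := by cases n <;> rfl

theorem Bb_pascal (n k : ℕ) :
    Bb (n+1) (k+1) = xv ^ (k+1) * Bb n (k+1) + yv ^ (n-k) * Bb n k := rfl

theorem B3ab : ∀ n : ℕ, ∀ k : ℕ, k ≤ n →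
    pqa (k+1) * Bb (n+1) (k+1) = pqa (n+1) * Bb n k ∧
    pqa (n+1-k) * Bb (n+1) k = pqa (n+1) * Bb n k := by
  intro n
  induction n with
  | zero =>
      intro k hk
      interval_cases k
      refine ⟨?_, ?_⟩
      · show pqa 1 * Bb 1 1 = pqa 1 * Bb 0 0
        rw [Bb_diag, Bb_diag]
      · show pqa 1 * Bb 1 0 = pqa 1 * Bb 0 0
        rw [Bb_zero_right, Bb_zero_right]
  | succ n ih =>
      intro k hk
      constructor
      · rcases Nat.lt_or_ge k (n+1) with hk' | hk'
        · have hkn : k ≤ n := by omega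
          have hsplit : pqa (n+2) = xv ^ (k+1) * pqa (n+1-k) + yv ^ (n+1-k) * pqa (k+1) := by
            have h : (k+1) + (n+1-k) = n+2 := by omega
            have h5 := pq_split xv yv (k+1) (n+1-k)
            rw [h] at h5
            exact h5
          rw [Bb_pascal (n+1) k]
          have h1 : n + 1 - k = (n - k) + 1 := by omega
          rw [h1, hsplit, h1]
          have h2' : pqa (n - k + 1) * Bb (n+1) k = pqa (n+1) * Bb n k := by
            rw [← h1]; exact (ih k hkn).2
          have h4 : pqa (k+1) * Bb (n+1) (k+1) = pqa (n+1) * Bb n k := (ih k hkn).1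
          linear_combination (xv:R5) ^ (k+1) * h4 - (xv:R5) ^ (k+1) * h2'
        · have hk2 : k = n + 1 := by omega
          subst hk2
          rw [Bb_diag, Bb_diag]
      · rcases Nat.eq_zero_or_pos k with hk0 | hk0
        · subst hk0
          rw [Bb_zero_right, Bb_zero_right]
          norm_num
        · obtain ⟨k', rfl⟩ : ∃ k', k = k' + 1 := ⟨k - 1, by omega⟩
          have hk'n : k' ≤ n := by omega
          rw [Bb_pascal (n+1) k']
          have e1 : n + 1 + 1 - (k'+1) = n + 1 - k' := by omega
          rw [e1]
          have h2 : pqa (n+1-k') * Bb (n+1) k' = pqa (n+1) * Bb n k' := (ih k' hk'n).2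
          have h1 : pqa (k'+1) * Bb (n+1) (k'+1) = pqa (n+1) * Bb n k' := (ih k' hk'n).1
          have hsplit2 : pqa (n+2) = xv ^ (k'+1) * pqa (n+1-k') + yv ^ (n+1-k') * pqa (k'+1) := by
            have h : (k'+1) + (n+1-k') = n+2 := by omega
            have h5 := pq_split xv yv (k'+1) (n+1-k')
            rw [h] at h5
            exact h5
          have e2 : n + 1 + 1 = n + 2 := by omega
          rw [e2, hsplit2]
          linear_combination (yv:R5)^(n+1-k') * h2 - (yv:R5)^(n+1-k') * h1

theorem B3a (n k : ℕ) (h : k ≤ n) :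
    pqa (k+1) * Bb (n+1) (k+1) = pqa (n+1) * Bb n k := (B3ab n k h).1

theorem B3b (n k : ℕ) (h : k ≤ n) :
    pqa (n+1-k) * Bb (n+1) k = pqa (n+1) * Bb n k := (B3ab n k h).2

def Dfac (n : ℕ) : R5 := ∏ i ∈ Icc 1 n, (1 - cp n i)
def Pbig (n : ℕ) : R5 := ∏ m ∈ Icc 1 n, Dfac m
def Delt (n : ℕ) : R5 := ∏ i ∈ range (n + 1), (1 - cp n i)
def Phi (n k : ℕ) : R5 :=
  av ^ n * xv ^ k.choose 2 * yv ^ (n - k).choose 2 * Bb n k * tufact n * Pbig n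
def Wf (n j k : ℕ) : R5 :=
  if j ≤ k then
    (∏ i ∈ range j, (1 - cp (n + 1) i)) * (∏ i ∈ Ico j k, cp (n + 1) i) *
      (∏ i ∈ Ico (k + 1) (n + 2), (1 - cp (n + 1) i))
  else 0

theorem cp_def (n i : ℕ) : cp n i = av * xv ^ i * pqa (n - i) := rfl

theorem pqa_one : pqa 1 = 1 := by simp [pqa, pqint]

theorem cp_self (n : ℕ) : cp n n = 0 := by
  rw [cp_def, Nat.sub_self, pqa_zero, mul_zero]

theorem choose2_succ (m : ℕ) : (m + 1).choose 2 = m.choose 2 + m := by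
  rw [Nat.choose_succ_succ]
  simp [Nat.choose_one_right, Nat.add_comm]

theorem tufact_succ (n : ℕ) : tufact (n + 1) = tufact n * pqt (n + 1) := by
  unfold tufact
  rw [Finset.prod_Icc_succ_top (by omega : 1 ≤ n + 1)]
  rfl

theorem Pbig_succ (n : ℕ) : Pbig (n + 1) = Pbig n * Dfac (n + 1) := by
  unfold Pbig
  rw [Finset.prod_Icc_succ_top (by omega : 1 ≤ n + 1)]

theorem Icc_prod_eq_range_succ (f : ℕ → R5) (n : ℕ) :
    ∏ i ∈ Icc 1 n, f i = ∏ i ∈ range n, f (i + 1) := by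
  rw [← Finset.Ico_add_one_right_eq_Icc, Finset.prod_Ico_eq_prod_range]
  simp [Nat.add_comm]

theorem Delt_eq (n : ℕ) : Delt n = (1 - cp n 0) * Dfac n := by
  unfold Delt Dfac
  rw [Finset.prod_range_succ', Icc_prod_eq_range_succ]
  ring

theorem Phi_zero (n k : ℕ) (h : n < k) : Phi n k = 0 := by
  unfold Phi
  rw [Bb_zero' n k h]
  ring

theorem Phi_zero_zero : Phi 0 0 = 1 := by
  unfold Phi Pbig tufact
  simp [Bb_zero_right]

-- nonzeroness
theorem one_sub_cp_ne (n i : ℕ) : (1 : R5) - cp n i ≠ 0 := by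
  intro h
  have := congrArg (MvPolynomial.eval (fun _ => (0 : ℚ))) h
  simp [cp_def, av, pqa, pqint] at this

theorem Delt_ne (n : ℕ) : Delt n ≠ 0 := by
  unfold Delt
  rw [Finset.prod_ne_zero_iff]
  exact fun i _ => one_sub_cp_ne n i

theorem Dfac_ne (n : ℕ) : Dfac n ≠ 0 := by
  unfold Dfac
  rw [Finset.prod_ne_zero_iff]
  exact fun i _ => one_sub_cp_ne n i

-- W lemmas
theorem Wf_zero (n j k : ℕ) (h : k < j) : Wf n j k = 0 := if_neg (by omega)

theorem Wf_step (n j k : ℕ) (hj : j ≤ k) (hk : k + 1 ≤ n + 1) :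
    (1 - cp (n + 1) (k + 1)) * Wf n j (k + 1) = cp (n + 1) k * Wf n j k := by
  unfold Wf
  rw [if_pos (by omega), if_pos hj]
  rw [Finset.prod_Ico_succ_top hj]
  rw [Finset.prod_eq_prod_Ico_succ_bot (by omega : k + 1 < n + 2)]
  ring

theorem Wf_diag_step (n k : ℕ) (hk : k + 1 ≤ n + 1) :
    (1 - cp (n + 1) (k + 1)) * Wf n (k + 1) (k + 1) = Delt (n + 1) := by
  unfold Wf Delt
  rw [if_pos le_rfl, Finset.Ico_self, Finset.prod_empty, mul_one]
  rw [← Finset.prod_range_mul_prod_Ico (fun i => 1 - cp (n + 1) i)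
    (by omega : k + 1 ≤ n + 2)]
  rw [Finset.prod_eq_prod_Ico_succ_bot (by omega : k + 1 < n + 2)]
  ring

theorem Wf_zero_zero (n : ℕ) : Wf n 0 0 = Dfac (n + 1) := by
  unfold Wf Dfac
  rw [if_pos le_rfl]
  simp only [Finset.range_zero, Finset.prod_empty, Finset.Ico_self, one_mul]
  rw [← Finset.Ico_add_one_right_eq_Icc]
  rfl


theorem Phi_def (n k : ℕ) : Phi n k =
    av ^ n * xv ^ k.choose 2 * yv ^ (n - k).choose 2 * Bb n k * tufact n * Pbig n := rfl

/-- The central algebraic identity. -/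
theorem AlgId (n k : ℕ) (hk : k ≤ n) :
    (1 - cp (n + 1) (k + 1)) * Phi (n + 1) (k + 1) =
      cp (n + 1) k * Phi (n + 1) k +
        Delt (n + 1) * pqt (n + 1) *
          (av * xv ^ k * yv ^ (n - k) * Phi n k +
            av * xv ^ (k + 1) * yv ^ (n - 1 - k) * Phi n (k + 1)) := by
  obtain ⟨d, rfl⟩ : ∃ d, n = k + d := ⟨n - k, by omega⟩
  rcases Nat.eq_zero_or_pos d with hd | hd
  · -- d = 0 : n = k
    subst hd
    simp only [Nat.add_zero] at *
    have e1 : k + 1 - (k + 1) = 0 := by omega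
    have e2 : k + 1 - k = 1 := by omega
    have e3 : k - k = 0 := by omega
    have e4 : k - (k + 1) = 0 := by omega
    have e5 : k - 1 - k = 0 := by omega
    rw [cp_self (k + 1)]
    rw [Phi_def (k + 1) (k + 1), Phi_def (k + 1) k, Phi_def k k, Phi_def k (k + 1)]
    rw [Bb_zero' k (k + 1) (by omega), Bb_diag, Bb_diag]
    rw [e1, e2, e3, e4, e5]
    rw [cp_def (k + 1) k, e2, pqa_one]
    rw [tufact_succ, Pbig_succ, Delt_eq (k + 1), cp_def (k + 1) 0, Nat.sub_zero]
    rw [choose2_succ k]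
    rw [pow_add]
    have hb := B3b k k le_rfl
    rw [e2, pqa_one, Bb_diag] at hb
    simp only [Nat.choose_self, Nat.choose_zero_right, Nat.zero_sub, Nat.choose_one_right,
      pow_zero, one_mul, mul_one, mul_zero, zero_mul, add_zero, Nat.choose] at *
    linear_combination (-(av ^ (k + 1) * xv ^ k.choose 2 * xv ^ k * tufact k * pqt (k + 1) *
      Pbig k * Dfac (k + 1) * av)) * hb
  · obtain ⟨d', rfl⟩ : ∃ d', d = d' + 1 := ⟨d - 1, by omega⟩
    have e1 : k + (d' + 1) + 1 - (k + 1) = d' + 1 := by omega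
    have e2 : k + (d' + 1) + 1 - k = d' + 2 := by omega
    have e3 : k + (d' + 1) - k = d' + 1 := by omega
    have e4 : k + (d' + 1) - (k + 1) = d' := by omega
    have e5 : k + (d' + 1) - 1 - k = d' := by omega
    have e6 : k + (d' + 1) + 1 - (k + 1 + 1) = d' := by omega
    set n := k + (d' + 1) with hn
    rw [Phi_def (n + 1) (k + 1), Phi_def (n + 1) k, Phi_def n k, Phi_def n (k + 1)]
    rw [e1, e2, e3, e4, e5]
    rw [cp_def (n + 1) (k + 1), cp_def (n + 1) k, e1, e2]
    rw [tufact_succ, Pbig_succ, Delt_eq (n + 1), cp_def (n + 1) 0, Nat.sub_zero]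
    rw [choose2_succ k, choose2_succ (d' + 1), choose2_succ d']
    simp only [pow_add]
    have h_pascal : Bb (n + 1) (k + 1) = xv ^ (k + 1) * Bb n (k + 1) + yv ^ (d' + 1) * Bb n k := by
      rw [Bb_pascal n k, e3]
    have h_split : pqa (n + 1) = xv ^ (k + 1) * pqa (d' + 1) + yv ^ (d' + 1) * pqa (k + 1) := by
      have h : (k + 1) + (d' + 1) = n + 1 := by omega
      have h5 := pq_split xv yv (k + 1) (d' + 1)
      rw [h] at h5
      exact h5
    have h_a : pqa (k + 1) * Bb (n + 1) (k + 1) = pqa (n + 1) * Bb n k := B3a n k (by omega)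
    have h_b : pqa (d' + 2) * Bb (n + 1) k = pqa (n + 1) * Bb n k := by
      have := B3b n k (by omega)
      rw [e2] at this
      exact this
    rw [pow_succ xv k, pow_succ yv d'] at h_pascal h_split
    set F : R5 := av ^ (n + 1) * xv ^ k.choose 2 * xv ^ k * yv ^ d'.choose 2 * yv ^ d' *
      Dfac (n + 1) * pqt (n + 1) * tufact n * Pbig n with hF
    linear_combination (F * (1 - av * pqa (n + 1))) * h_pascal +
      (F * av * Bb (n + 1) (k + 1)) * h_split +
      (F * av * yv ^ d' * yv) * h_a - (F * av * yv ^ d' * yv) * h_b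

def Ssum (n k : ℕ) : R5 :=
  ∑ l ∈ range (n + 1),
    av * xv ^ l * yv ^ (n - l) * (Wf n l k + Wf n (l + 1) k) * Phi n l

theorem SumKey (n k : ℕ) (hk : k ≤ n) :
    (1 - cp (n + 1) (k + 1)) * Ssum n (k + 1) =
      cp (n + 1) k * Ssum n k +
        Delt (n + 1) * (av * xv ^ k * yv ^ (n - k) * Phi n k) +
        Delt (n + 1) * (av * xv ^ (k + 1) * yv ^ (n - 1 - k) * Phi n (k + 1)) := by
  have hk1 : k + 1 ≤ n + 1 := by omega
  have key : ∀ l ∈ range (n + 1),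
      (1 - cp (n + 1) (k + 1)) *
          (av * xv ^ l * yv ^ (n - l) * (Wf n l (k + 1) + Wf n (l + 1) (k + 1)) * Phi n l) -
        cp (n + 1) k *
          (av * xv ^ l * yv ^ (n - l) * (Wf n l k + Wf n (l + 1) k) * Phi n l) =
      (if l = k then Delt (n + 1) * (av * xv ^ k * yv ^ (n - k) * Phi n k) else 0) +
        (if l = k + 1 then
          Delt (n + 1) * (av * xv ^ (k + 1) * yv ^ (n - 1 - k) * Phi n (k + 1)) else 0) := by
    intro l hl
    rcases lt_trichotomy l k with hlk | hlk | hlk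
    · rw [if_neg (by omega), if_neg (by omega)]
      have hs1 := Wf_step n l k (by omega) hk1
      have hs2 := Wf_step n (l + 1) k (by omega) hk1
      linear_combination (av * xv ^ l * yv ^ (n - l) * Phi n l) * hs1 +
        (av * xv ^ l * yv ^ (n - l) * Phi n l) * hs2
    · subst hlk
      rw [if_pos rfl, if_neg (by omega)]
      have hs1 := Wf_step n l l le_rfl hk1
      have hd := Wf_diag_step n l hk1
      have hz1 : Wf n (l + 1) l = 0 := Wf_zero n (l + 1) l (by omega)
      rw [hz1]
      linear_combination (av * xv ^ l * yv ^ (n - l) * Phi n l) * hs1 +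
        (av * xv ^ l * yv ^ (n - l) * Phi n l) * hd
    · rw [if_neg (by omega)]
      rcases Nat.eq_or_lt_of_le hlk with hlk2 | hlk2
      · -- l = k + 1
        have hl2 : l = k + 1 := by omega
        subst hl2
        rw [if_pos rfl]
        have hd := Wf_diag_step n k hk1
        have hz1 : Wf n (k + 1) k = 0 := Wf_zero n (k + 1) k (by omega)
        have hz2 : Wf n (k + 2) k = 0 := Wf_zero n (k + 2) k (by omega)
        have hz3 : Wf n (k + 2) (k + 1) = 0 := Wf_zero n (k + 2) (k + 1) (by omega)
        rw [hz1, hz2, hz3]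
        have he : n - (k + 1) = n - 1 - k := by omega
        rw [he]
        linear_combination (av * xv ^ (k + 1) * yv ^ (n - 1 - k) * Phi n (k + 1)) * hd
      · -- l > k + 1
        rw [if_neg (by omega)]
        have hz1 : Wf n l (k + 1) = 0 := Wf_zero n l (k + 1) (by omega)
        have hz2 : Wf n (l + 1) (k + 1) = 0 := Wf_zero n (l + 1) (k + 1) (by omega)
        have hz3 : Wf n l k = 0 := Wf_zero n l k (by omega)
        have hz4 : Wf n (l + 1) k = 0 := Wf_zero n (l + 1) k (by omega)
        rw [hz1, hz2, hz3, hz4]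
        ring
  have hsum :
      (1 - cp (n + 1) (k + 1)) * Ssum n (k + 1) - cp (n + 1) k * Ssum n k =
      Delt (n + 1) * (av * xv ^ k * yv ^ (n - k) * Phi n k) +
        Delt (n + 1) * (av * xv ^ (k + 1) * yv ^ (n - 1 - k) * Phi n (k + 1)) := by
    unfold Ssum
    rw [Finset.mul_sum, Finset.mul_sum, ← Finset.sum_sub_distrib]
    rw [Finset.sum_congr rfl key]
    rw [Finset.sum_add_distrib, Finset.sum_ite_eq' (range (n + 1)) k,
      Finset.sum_ite_eq' (range (n + 1)) (k + 1)]
    rw [if_pos (Finset.mem_range.mpr (by omega))]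
    by_cases h2 : k + 1 ∈ range (n + 1)
    · rw [if_pos h2]
    · rw [if_neg h2]
      have hkn : k = n := by
        have := Finset.mem_range.not.mp h2
        omega
      subst hkn
      rw [Phi_zero k (k + 1) (by omega)]
      ring
  linear_combination hsum

theorem SPhi (n : ℕ) : ∀ k, k ≤ n + 1 → pqt (n + 1) * Ssum n k = Phi (n + 1) k := by
  intro k
  induction k with
  | zero =>
      intro _
      unfold Ssum
      have hterm : ∀ l ∈ range (n + 1),
          av * xv ^ l * yv ^ (n - l) * (Wf n l 0 + Wf n (l + 1) 0) * Phi n l =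
          if l = 0 then av * yv ^ n * Dfac (n + 1) * Phi n 0 else 0 := by
        intro l _
        rcases Nat.eq_zero_or_pos l with h | h
        · subst h
          rw [if_pos rfl, Wf_zero_zero, Wf_zero n 1 0 (by omega)]
          simp only [Nat.sub_zero]
          ring
        · rw [if_neg (by omega), Wf_zero n l 0 (by omega), Wf_zero n (l + 1) 0 (by omega)]
          ring
      rw [Finset.sum_congr rfl hterm, Finset.sum_ite_eq' (range (n + 1)) 0,
        if_pos (Finset.mem_range.mpr (by omega))]
      rw [Phi_def (n + 1) 0, Phi_def n 0, Bb_zero_right, Bb_zero_right]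
      simp only [Nat.sub_zero]
      rw [tufact_succ, Pbig_succ, choose2_succ n, pow_add]
      ring
  | succ k ih =>
      intro hk
      have hkn : k ≤ n := by omega
      have h1 := SumKey n k hkn
      have h2 := AlgId n k hkn
      have hI := ih (by omega)
      have hcan : (1 - cp (n + 1) (k + 1)) * (pqt (n + 1) * Ssum n (k + 1)) =
          (1 - cp (n + 1) (k + 1)) * Phi (n + 1) (k + 1) := by
        linear_combination pqt (n + 1) * h1 + cp (n + 1) k * hI - h2
      exact mul_left_cancel₀ (one_sub_cp_ne (n + 1) (k + 1)) hcan

-- ===================== matrix part =====================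
open Matrix

theorem Nsz_succ (n : ℕ) : Nsz (n + 1) = Nsz n + (n + 2) := rfl

theorem Nsz_ge (n : ℕ) : n + 1 ≤ Nsz n := by
  induction n with
  | zero => simp [Nsz]
  | succ n ih => rw [Nsz_succ]; omega

theorem Mhat_apply (n : ℕ) (i j : Fin (n + 2)) :
    Mhat n i j = (1 - cp (n + 1) (i : ℕ)) * (if (i : ℕ) = (j : ℕ) then 1 else 0) -
      cp (n + 1) (i : ℕ) * (if (i : ℕ) + 1 = (j : ℕ) then 1 else 0) := by
  show (if (i : ℕ) = (j : ℕ) then (1:R5) else 0) -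
    av * xv ^ (i : ℕ) * pqint xv yv (n + 1 - (i : ℕ)) *
      ((if (i : ℕ) = (j : ℕ) then 1 else 0) + (if (i : ℕ) + 1 = (j : ℕ) then 1 else 0)) = _
  rw [cp_def]
  show _ = (1 - av * xv ^ (i:ℕ) * pqa (n + 1 - (i:ℕ))) * _ -
    av * xv ^ (i:ℕ) * pqa (n + 1 - (i:ℕ)) * _
  unfold pqa
  ring

theorem Mhat_det (n : ℕ) : (Mhat n).det = Delt (n + 1) := by
  have htri : (Mhat n).BlockTriangular id := by
    intro i j hij
    have h1 : (j : ℕ) < (i : ℕ) := hij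
    rw [Mhat_apply, if_neg (by omega), if_neg (by omega)]
    ring
  rw [Matrix.det_of_upperTriangular htri]
  have hdiag : ∀ i : Fin (n + 2), Mhat n i i = 1 - cp (n + 1) (i : ℕ) := by
    intro i
    rw [Mhat_apply, if_pos rfl, if_neg (by omega)]
    ring
  rw [Finset.prod_congr rfl (fun i _ => hdiag i)]
  rw [Fin.prod_univ_eq_prod_range (fun i => 1 - cp (n + 1) i) (n + 2)]
  rfl

theorem Mmat_succ (n : ℕ) :
    Mmat (n + 1) = (Matrix.fromBlocks (Mmat n) (Mbar n) 0 (Mhat n)).submatrix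
      finSumFinEquiv.symm finSumFinEquiv.symm := rfl

def detMf (n : ℕ) : R5 := ∏ m ∈ Icc 1 n, Delt m

theorem Mmat_det (n : ℕ) : (Mmat n).det = detMf n := by
  induction n with
  | zero =>
      have : (Mmat 0).det = 1 := by
        have h0 : (Mmat 0) = (1 : Matrix (Fin (Nsz 0)) (Fin (Nsz 0)) R5) := by
          ext i j
          have hi : (i : ℕ) < 1 := i.isLt
          have hj : (j : ℕ) < 1 := j.isLt
          have : i = j := Fin.ext (by omega)
          subst this
          simp [Mmat, Matrix.one_apply]
        rw [h0, Matrix.det_one]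
      rw [this]
      unfold detMf
      simp
  | succ n ih =>
      have h : (Mmat (n + 1)).det = (Matrix.fromBlocks (Mmat n) (Mbar n) 0 (Mhat n)).det :=
        Matrix.det_submatrix_equiv_self finSumFinEquiv.symm _
      rw [h, Matrix.det_fromBlocks_zero₂₁, ih, Mhat_det]
      unfold detMf
      rw [Finset.prod_Icc_succ_top (by omega : 1 ≤ n + 1)]

theorem detMf_ne (n : ℕ) : detMf n ≠ 0 := by
  unfold detMf
  rw [Finset.prod_ne_zero_iff]
  exact fun m _ => Delt_ne m

theorem Mmat_det_ne (n : ℕ) : (Mmat n).det ≠ 0 := by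
  rw [Mmat_det]; exact detMf_ne n

theorem smul_mat_cancel {I J : Type*} (c : R5) (hc : c ≠ 0) (X Y : Matrix I J R5)
    (h : c • X = c • Y) : X = Y := by
  refine Matrix.ext fun i j => ?_
  have h2 := congrFun (congrFun h i) j
  simp only [Matrix.smul_apply, smul_eq_mul] at h2
  exact mul_left_cancel₀ hc h2

theorem Wf_row_step (n j k : ℕ) (hj : j < k) (hk : k ≤ n + 1) :
    (1 - cp (n + 1) j) * Wf n j k = cp (n + 1) j * Wf n (j + 1) k := by
  unfold Wf
  rw [if_pos (by omega : j ≤ k), if_pos (by omega : j + 1 ≤ k)]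
  rw [Finset.prod_range_succ]
  rw [Finset.prod_eq_prod_Ico_succ_bot hj]
  ring

theorem Wf_diag (n i : ℕ) (hi : i ≤ n + 1) :
    (1 - cp (n + 1) i) * Wf n i i = Delt (n + 1) := by
  cases i with
  | zero => rw [Wf_zero_zero, Delt_eq]
  | succ k => exact Wf_diag_step n k (by omega)

def Wmat (n : ℕ) : Matrix (Fin (n + 2)) (Fin (n + 2)) R5 :=
  Matrix.of fun j k => Wf n (j : ℕ) (k : ℕ)

theorem Wmat_apply (n : ℕ) (j k : Fin (n + 2)) : Wmat n j k = Wf n (j : ℕ) (k : ℕ) := rfl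

theorem sum_ite_one_mul {m : ℕ} (v : ℕ) (hv : v < m) (f : Fin m → R5) :
    ∑ j : Fin m, (if v = (j : ℕ) then (1 : R5) else 0) * f j = f ⟨v, hv⟩ := by
  rw [Finset.sum_eq_single (⟨v, hv⟩ : Fin m)]
  · simp
  · intro j _ hj
    rw [if_neg, zero_mul]
    intro hvj
    exact hj (Fin.ext hvj.symm)
  · intro h
    exact absurd (Finset.mem_univ _) h

theorem sum_ite_one_mul_zero {m : ℕ} (v : ℕ) (hv : ¬ v < m) (f : Fin m → R5) :
    ∑ j : Fin m, (if v = (j : ℕ) then (1 : R5) else 0) * f j = 0 := by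
  apply Finset.sum_eq_zero
  intro j _
  rw [if_neg, zero_mul]
  intro hvj
  exact hv (hvj ▸ j.isLt)

theorem Mhat_mul_W (n : ℕ) :
    Mhat n * Wmat n = Delt (n + 1) • (1 : Matrix (Fin (n + 2)) (Fin (n + 2)) R5) := by
  refine Matrix.ext fun i k => ?_
  rw [Matrix.mul_apply]
  simp only [Matrix.smul_apply, Matrix.one_apply, smul_eq_mul]
  have hterm : ∀ j, Mhat n i j * Wmat n j k =
      (1 - cp (n + 1) (i : ℕ)) * ((if (i : ℕ) = (j : ℕ) then (1 : R5) else 0) * Wmat n j k)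
        - cp (n + 1) (i : ℕ) * ((if (i : ℕ) + 1 = (j : ℕ) then (1 : R5) else 0) * Wmat n j k) := by
    intro j
    rw [Mhat_apply]
    ring
  rw [Finset.sum_congr rfl (fun j _ => hterm j), Finset.sum_sub_distrib,
    ← Finset.mul_sum, ← Finset.mul_sum]
  rw [sum_ite_one_mul (i : ℕ) i.isLt]
  have hik : (i : ℕ) < n + 2 := i.isLt
  have hkk : (k : ℕ) < n + 2 := k.isLt
  rcases lt_trichotomy (i : ℕ) (k : ℕ) with h | h | h
  · rw [sum_ite_one_mul ((i : ℕ) + 1) (by omega), if_neg (fun he => by rw [he] at h; omega)]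
    simp only [Fin.eta, Wmat_apply]
    have hrs := Wf_row_step n (i : ℕ) (k : ℕ) h (by omega)
    linear_combination hrs
  · have hfik : i = k := Fin.ext h
    rw [if_pos hfik]
    subst hfik
    by_cases h2 : (i : ℕ) + 1 < n + 2
    · rw [sum_ite_one_mul ((i : ℕ) + 1) h2]
      simp only [Fin.eta, Wmat_apply]
      rw [Wf_zero n ((i : ℕ) + 1) (i : ℕ) (by omega)]
      have hd := Wf_diag n (i : ℕ) (by omega)
      linear_combination hd
    · rw [sum_ite_one_mul_zero ((i : ℕ) + 1) h2]
      simp only [Fin.eta, Wmat_apply]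
      have hd := Wf_diag n (i : ℕ) (by omega)
      linear_combination hd
  · rw [if_neg (fun he => by rw [he] at h; omega)]
    simp only [Fin.eta, Wmat_apply]
    rw [Wf_zero n (i : ℕ) (k : ℕ) h]
    by_cases h2 : (i : ℕ) + 1 < n + 2
    · rw [sum_ite_one_mul ((i : ℕ) + 1) h2]
      simp only [Wmat_apply]
      rw [Wf_zero n ((i : ℕ) + 1) (k : ℕ) (by omega)]
      ring
    · rw [sum_ite_one_mul_zero ((i : ℕ) + 1) h2]
      ring

theorem adj_Mhat (n : ℕ) : Matrix.adjugate (Mhat n) = Wmat n := by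
  have h1 : Mhat n * Matrix.adjugate (Mhat n) = Mhat n * Wmat n := by
    rw [Matrix.mul_adjugate, Mhat_det, Mhat_mul_W]
  have h2 := congrArg (fun X => Matrix.adjugate (Mhat n) * X) h1
  simp only [← Matrix.mul_assoc, Matrix.adjugate_mul, Mhat_det] at h2
  rw [Matrix.smul_mul, Matrix.smul_mul, Matrix.one_mul, Matrix.one_mul] at h2
  exact smul_mat_cancel _ (Delt_ne (n + 1)) _ _ h2

theorem adj_fromBlocks_12 {K L : ℕ} (A : Matrix (Fin K) (Fin K) R5)
    (B : Matrix (Fin K) (Fin L) R5) (D : Matrix (Fin L) (Fin L) R5)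
    (hA : A.det ≠ 0) (hD : D.det ≠ 0) (i : Fin K) (j : Fin L) :
    Matrix.adjugate (Matrix.fromBlocks A B 0 D) (Sum.inl i) (Sum.inr j) =
      -((Matrix.adjugate A * B * Matrix.adjugate D) i j) := by
  have hdet : (Matrix.fromBlocks A B 0 D).det = A.det * D.det :=
    Matrix.det_fromBlocks_zero₂₁ A B D
  set adjM := Matrix.adjugate (Matrix.fromBlocks A B 0 D) with hadjM
  have hadj : adjM * Matrix.fromBlocks A B 0 D =
      (A.det * D.det) • (1 : Matrix (Fin K ⊕ Fin L) (Fin K ⊕ Fin L) R5) := by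
    rw [hadjM, Matrix.adjugate_mul, hdet]
  set P11 : Matrix (Fin K) (Fin K) R5 :=
    Matrix.of (fun a b => adjM (Sum.inl a) (Sum.inl b)) with hP11
  set P12 : Matrix (Fin K) (Fin L) R5 :=
    Matrix.of (fun a b => adjM (Sum.inl a) (Sum.inr b)) with hP12
  have h11 : P11 * A = (A.det * D.det) • (1 : Matrix (Fin K) (Fin K) R5) := by
    refine Matrix.ext fun a b => ?_
    have h := congrFun (congrFun hadj (Sum.inl a)) (Sum.inl b)
    rw [Matrix.mul_apply, Fintype.sum_sum_type] at h
    simp only [Matrix.fromBlocks_apply₁₁, Matrix.fromBlocks_apply₂₁, Matrix.zero_apply,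
      mul_zero, Finset.sum_const_zero, add_zero, Matrix.smul_apply, Matrix.one_apply,
      smul_eq_mul, Sum.inl.injEq] at h
    rw [Matrix.mul_apply]
    simp only [hP11, Matrix.of_apply, Matrix.smul_apply, Matrix.one_apply, smul_eq_mul]
    exact h
  have h12 : P11 * B + P12 * D = 0 := by
    refine Matrix.ext fun a b => ?_
    have h := congrFun (congrFun hadj (Sum.inl a)) (Sum.inr b)
    rw [Matrix.mul_apply, Fintype.sum_sum_type] at h
    simp only [Matrix.fromBlocks_apply₁₂, Matrix.fromBlocks_apply₂₂, Matrix.smul_apply,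
      Matrix.one_apply, smul_eq_mul] at h
    rw [if_neg (by simp), mul_zero] at h
    rw [Matrix.add_apply, Matrix.mul_apply, Matrix.mul_apply, Matrix.zero_apply]
    simp only [hP11, hP12, Matrix.of_apply]
    exact h
  have h3 : A.det • P11 = A.det • (D.det • Matrix.adjugate A) := by
    have hc : P11 * (A * Matrix.adjugate A) = (A.det * D.det) • Matrix.adjugate A := by
      rw [← Matrix.mul_assoc, h11, Matrix.smul_mul, Matrix.one_mul]
    rw [Matrix.mul_adjugate, Matrix.mul_smul, Matrix.mul_one] at hc
    rw [hc, smul_smul]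
  have hP11eq : P11 = D.det • Matrix.adjugate A := smul_mat_cancel _ hA _ _ h3
  have h4 : P12 * D = -(D.det • (Matrix.adjugate A * B)) := by
    have h5 := eq_neg_of_add_eq_zero_right h12
    rw [h5, hP11eq, Matrix.smul_mul]
  have h6 : D.det • P12 = D.det • (-(Matrix.adjugate A * B * Matrix.adjugate D)) := by
    have hc : P12 * (D * Matrix.adjugate D) =
        (-(D.det • (Matrix.adjugate A * B))) * Matrix.adjugate D := by
      rw [← Matrix.mul_assoc, h4]
    rw [Matrix.mul_adjugate, Matrix.mul_smul, Matrix.mul_one] at hc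
    rw [hc, Matrix.neg_mul, Matrix.smul_mul, smul_neg]
  have hP12eq : P12 = -(Matrix.adjugate A * B * Matrix.adjugate D) :=
    smul_mat_cancel _ hD _ _ h6
  have h7 := congrFun (congrFun hP12eq i) j
  simpa [hP12, Matrix.neg_apply] using h7

theorem gam_pos_bound (n k : ℕ) (h : k ≤ n) : Nsz n - (n + 1) + k < Nsz n := by
  have := Nsz_ge n
  omega

def gam (n k : ℕ) : R5 :=
  if h : k ≤ n then
    Matrix.adjugate (Mmat n) ⟨0, Nsz_pos n⟩ ⟨Nsz n - (n + 1) + k, gam_pos_bound n k h⟩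
  else 0

theorem gam_def (n k : ℕ) (h : k ≤ n) :
    gam n k = Matrix.adjugate (Mmat n) ⟨0, Nsz_pos n⟩
      ⟨Nsz n - (n + 1) + k, gam_pos_bound n k h⟩ := dif_pos h

theorem Mhat_det_ne (n : ℕ) : (Mhat n).det ≠ 0 := by
  rw [Mhat_det]
  exact Delt_ne (n + 1)

theorem MbarW_row (n : ℕ) (r : Fin (Nsz n)) (c : Fin (n + 2)) :
    (Mbar n * Wmat n) r c =
      if Nsz n ≤ (r : ℕ) + (n + 1) then
        -(av * xv ^ ((r : ℕ) - (Nsz n - (n + 1))) *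
            yv ^ (n - ((r : ℕ) - (Nsz n - (n + 1)))) * pqt (n + 1) *
          (Wf n ((r : ℕ) - (Nsz n - (n + 1))) (c : ℕ) +
            Wf n ((r : ℕ) - (Nsz n - (n + 1)) + 1) (c : ℕ)))
      else 0 := by
  rw [Matrix.mul_apply]
  by_cases hr : Nsz n ≤ (r : ℕ) + (n + 1)
  · rw [if_pos hr]
    set l := (r : ℕ) - (Nsz n - (n + 1)) with hl
    have hln : l ≤ n := by
      have h1 := r.isLt
      have h2 := Nsz_ge n
      omega
    have hterm : ∀ j : Fin (n + 2), Mbar n r j * Wmat n j c =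
        (-av * xv ^ l * yv ^ (n - l) * pqt (n + 1)) *
          ((if l = (j : ℕ) then (1 : R5) else 0) * Wmat n j c +
            (if l + 1 = (j : ℕ) then (1 : R5) else 0) * Wmat n j c) := by
      intro j
      show (if Nsz n ≤ (r : ℕ) + (n + 1) then _ else 0) * Wmat n j c = _
      rw [if_pos hr]
      show (-av * xv ^ l * yv ^ (n - l) * pqint tv uv (n + 1) *
        ((if l = (j : ℕ) then (1:R5) else 0) + (if l + 1 = (j : ℕ) then 1 else 0))) *
          Wmat n j c = _
      unfold pqt
      ring
    rw [Finset.sum_congr rfl (fun j _ => hterm j)]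
    rw [← Finset.mul_sum, Finset.sum_add_distrib]
    rw [sum_ite_one_mul l (by omega), sum_ite_one_mul (l + 1) (by omega)]
    simp only [Wmat_apply]
    ring
  · rw [if_neg hr]
    apply Finset.sum_eq_zero
    intro j _
    show (if Nsz n ≤ (r : ℕ) + (n + 1) then _ else 0) * Wmat n j c = 0
    rw [if_neg hr, zero_mul]

theorem gam_rec (n k : ℕ) (hk : k ≤ n + 1) :
    gam (n + 1) k = ∑ l ∈ range (n + 1),
      av * xv ^ l * yv ^ (n - l) * pqt (n + 1) *
        (Wf n l k + Wf n (l + 1) k) * gam n l := by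
  have hK := Nsz_ge n
  have hkf : k < n + 2 := by omega
  -- step 1 : rewrite adjugate of Mmat (n+1) via block adjugate
  have hsub : Matrix.adjugate (Mmat (n + 1)) =
      (Matrix.adjugate (Matrix.fromBlocks (Mmat n) (Mbar n) 0 (Mhat n))).submatrix
        finSumFinEquiv.symm finSumFinEquiv.symm :=
    Matrix.adjugate_submatrix_equiv_self finSumFinEquiv.symm _
  rw [gam_def (n + 1) k hk, hsub]
  change Matrix.adjugate (Matrix.fromBlocks (Mmat n) (Mbar n) 0 (Mhat n))
    (finSumFinEquiv.symm (⟨0, Nsz_pos (n + 1)⟩ : Fin (Nsz (n + 1))))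
    (finSumFinEquiv.symm (⟨Nsz (n + 1) - (n + 2) + k, gam_pos_bound (n + 1) k hk⟩ : Fin (Nsz (n + 1)))) = _
  have e0 : finSumFinEquiv.symm (⟨0, Nsz_pos (n + 1)⟩ : Fin (Nsz (n + 1))) =
      Sum.inl (⟨0, Nsz_pos n⟩ : Fin (Nsz n)) := by
    have h1 : (⟨0, Nsz_pos (n + 1)⟩ : Fin (Nsz (n + 1))) =
        Fin.castAdd (n + 2) (⟨0, Nsz_pos n⟩ : Fin (Nsz n)) := rfl
    rw [h1, finSumFinEquiv_symm_apply_castAdd]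
  have e1 : finSumFinEquiv.symm
      (⟨Nsz (n + 1) - (n + 2) + k, gam_pos_bound (n + 1) k hk⟩ : Fin (Nsz (n + 1))) =
      Sum.inr (⟨k, hkf⟩ : Fin (n + 2)) := by
    have h1 : (⟨Nsz (n + 1) - (n + 2) + k, gam_pos_bound (n + 1) k hk⟩ : Fin (Nsz (n + 1))) =
        Fin.natAdd (Nsz n) (⟨k, hkf⟩ : Fin (n + 2)) := by
      apply Fin.ext
      show Nsz (n + 1) - (n + 2) + k = Nsz n + k
      rw [Nsz_succ]
      omega
    rw [h1, finSumFinEquiv_symm_apply_natAdd]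
  rw [e0, e1]
  rw [adj_fromBlocks_12 (Mmat n) (Mbar n) (Mhat n) (Mmat_det_ne n) (Mhat_det_ne n)]
  rw [adj_Mhat, Matrix.mul_assoc, Matrix.mul_apply]
  -- per-row evaluation
  have hrow : ∀ r : Fin (Nsz n),
      Matrix.adjugate (Mmat n) ⟨0, Nsz_pos n⟩ r * (Mbar n * Wmat n) r ⟨k, hkf⟩ =
      -(if Nsz n ≤ (r : ℕ) + (n + 1) then
          av * xv ^ ((r : ℕ) - (Nsz n - (n + 1))) *
            yv ^ (n - ((r : ℕ) - (Nsz n - (n + 1)))) * pqt (n + 1) *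
            (Wf n ((r : ℕ) - (Nsz n - (n + 1))) k +
              Wf n ((r : ℕ) - (Nsz n - (n + 1)) + 1) k) *
            gam n ((r : ℕ) - (Nsz n - (n + 1)))
        else 0) := by
    intro r
    rw [MbarW_row]
    by_cases hr : Nsz n ≤ (r : ℕ) + (n + 1)
    · rw [if_pos hr, if_pos hr]
      set l := (r : ℕ) - (Nsz n - (n + 1)) with hl
      have hln : l ≤ n := by
        have h1 := r.isLt
        omega
      have hg : gam n l = Matrix.adjugate (Mmat n) ⟨0, Nsz_pos n⟩ r := by
        rw [gam_def n l hln]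
        congr 1
        apply Fin.ext
        show Nsz n - (n + 1) + l = (r : ℕ)
        omega
      rw [← hg]
      ring
    · rw [if_neg hr, if_neg hr, mul_zero, neg_zero]
  rw [Finset.sum_congr rfl (fun r _ => hrow r)]
  rw [← Finset.sum_neg_distrib]
  simp only [neg_neg]
  -- reindex the sum
  have hfin := Fin.sum_univ_eq_sum_range
    (fun rv : ℕ => if Nsz n ≤ rv + (n + 1) then
        av * xv ^ (rv - (Nsz n - (n + 1))) * yv ^ (n - (rv - (Nsz n - (n + 1)))) *
          pqt (n + 1) * (Wf n (rv - (Nsz n - (n + 1))) k +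
            Wf n (rv - (Nsz n - (n + 1)) + 1) k) * gam n (rv - (Nsz n - (n + 1)))
      else 0) (Nsz n)
  rw [hfin, range_eq_Ico,
    ← Finset.sum_Ico_consecutive _ (by omega : 0 ≤ Nsz n - (n + 1)) (by omega : Nsz n - (n + 1) ≤ Nsz n)]
  have hzero : ∑ rv ∈ Ico 0 (Nsz n - (n + 1)),
      (if Nsz n ≤ rv + (n + 1) then
        av * xv ^ (rv - (Nsz n - (n + 1))) * yv ^ (n - (rv - (Nsz n - (n + 1)))) *
          pqt (n + 1) * (Wf n (rv - (Nsz n - (n + 1))) k +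
            Wf n (rv - (Nsz n - (n + 1)) + 1) k) * gam n (rv - (Nsz n - (n + 1)))
      else 0) = 0 := by
    apply Finset.sum_eq_zero
    intro rv hrv
    rw [Finset.mem_Ico] at hrv
    rw [if_neg (by omega)]
  rw [hzero, zero_add, Finset.sum_Ico_eq_sum_range]
  have hcnt : Nsz n - (Nsz n - (n + 1)) = n + 1 := by omega
  rw [hcnt]
  apply Finset.sum_congr rfl
  intro i hi
  rw [if_pos (by omega)]
  have harg : Nsz n - (n + 1) + i - (Nsz n - (n + 1)) = i := by omega
  rw [harg]

theorem gam_zero : gam 0 0 = 1 := by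
  rw [gam_def 0 0 le_rfl]
  have h : Matrix.adjugate (Mmat 0) = (1 : Matrix (Fin (Nsz 0)) (Fin (Nsz 0)) R5) :=
    Matrix.adjugate_fin_one (Mmat 0)
  rw [h]
  have h2 : (⟨Nsz 0 - (0 + 1) + 0, gam_pos_bound 0 0 le_rfl⟩ : Fin (Nsz 0)) =
      ⟨0, Nsz_pos 0⟩ := Fin.ext rfl
  rw [h2, Matrix.one_apply_eq]

theorem gamPhi : ∀ n k, k ≤ n → gam n k = Phi n k := by
  intro n
  induction n with
  | zero =>
      intro k hk
      interval_cases k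
      rw [gam_zero, Phi_zero_zero]
  | succ n ih =>
      intro k hk
      rw [gam_rec n k hk]
      have hterm : ∀ l ∈ range (n + 1),
          av * xv ^ l * yv ^ (n - l) * pqt (n + 1) * (Wf n l k + Wf n (l + 1) k) * gam n l =
          pqt (n + 1) * (av * xv ^ l * yv ^ (n - l) * (Wf n l k + Wf n (l + 1) k) * Phi n l) := by
        intro l hl
        have hl2 := Finset.mem_range.mp hl
        rw [ih l (by omega)]
        ring
      rw [Finset.sum_congr rfl hterm, ← Finset.mul_sum]
      exact SPhi n k hk

theorem adj_last {m : ℕ} (A : Matrix (Fin (m + 1)) (Fin (m + 1)) R5) :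
    Matrix.adjugate A 0 (Fin.last m) =
      (-1 : R5) ^ m * (A.submatrix Fin.castSucc Fin.succ).det := by
  rw [Matrix.adjugate_apply]
  rw [Matrix.det_succ_row _ (Fin.last m)]
  rw [Finset.sum_eq_single (0 : Fin (m + 1))]
  · rw [Matrix.updateRow_self]
    simp only [Pi.single_eq_same]
    have hsub : (A.updateRow (Fin.last m) (Pi.single 0 1)).submatrix
        (Fin.last m).succAbove (0 : Fin (m + 1)).succAbove =
        A.submatrix Fin.castSucc Fin.succ := by
      refine Matrix.ext fun i j => ?_
      rw [Matrix.submatrix_apply, Matrix.submatrix_apply]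
      rw [Fin.succAbove_last, Fin.succAbove_zero]
      rw [Matrix.updateRow_ne (Fin.castSucc_lt_last i).ne]
    rw [hsub]
    simp only [Fin.val_last, Fin.val_zero, Nat.add_zero]
    ring
  · intro j _ hj
    rw [Matrix.updateRow_self]
    have hz : Pi.single (M := fun _ : Fin (m + 1) => R5) 0 1 j = 0 :=
      Pi.single_eq_of_ne hj 1
    rw [hz]
    ring
  · intro h
    exact absurd (Finset.mem_univ _) h

theorem Pmat_det_gam (n : ℕ) :
    (Pmat n).det = (-1 : R5) ^ (Nsz n - 1) * gam n n := by
  have h1 : Nsz n = (Nsz n - 1) + 1 := by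
    have := Nsz_pos n
    omega
  have hnge := Nsz_ge n
  set m := Nsz n - 1 with hm
  set e : Fin (m + 1) ≃ Fin (Nsz n) := finCongr h1.symm with he
  have hadj : Matrix.adjugate ((Mmat n).submatrix e e) =
      (Matrix.adjugate (Mmat n)).submatrix e e :=
    Matrix.adjugate_submatrix_equiv_self e (Mmat n)
  have h2 := adj_last ((Mmat n).submatrix e e)
  rw [hadj] at h2
  have e0 : e (0 : Fin (m + 1)) = ⟨0, Nsz_pos n⟩ := by
    apply Fin.ext
    simp [he, finCongr]
  have elast : e (Fin.last m) = ⟨Nsz n - (n + 1) + n, gam_pos_bound n n le_rfl⟩ := by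
    apply Fin.ext
    show (Fin.last m : Fin (m+1)).val = Nsz n - (n + 1) + n
    rw [Fin.val_last]
    omega
  rw [Matrix.submatrix_apply, e0, elast] at h2
  have hsubm : ((Mmat n).submatrix e e).submatrix Fin.castSucc Fin.succ = Pmat n := by
    refine Matrix.ext fun i j => ?_
    show Mmat n (e (Fin.castSucc i)) (e (Fin.succ j)) = Pmat n i j
    have hval1 : ((e (Fin.castSucc i)) : ℕ) = (i : ℕ) := by simp [he, finCongr]
    have hval2 : ((e (Fin.succ j)) : ℕ) = (j : ℕ) + 1 := by simp [he, finCongr]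
    unfold Pmat
    exact congrArg₂ (Mmat n) (Fin.ext hval1) (Fin.ext hval2)
  rw [hsubm] at h2
  rw [gam_def n n le_rfl, h2, ← mul_assoc, ← pow_add]
  have heven : Even (m + m) := ⟨m, rfl⟩
  rw [heven.neg_one_pow, one_mul]

theorem sign_eq (n : ℕ) : (-1 : R5) ^ (Nsz n - 1) = (-1 : R5) ^ n.choose 2 := by
  induction n with
  | zero => rfl
  | succ n ih =>
      have h1 : Nsz (n + 1) - 1 = (Nsz n - 1) + (n + 2) := by
        rw [Nsz_succ]
        have := Nsz_pos n
        omega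
      rw [h1, choose2_succ, pow_add, pow_add, ih]
      congr 1
      rw [pow_add]
      norm_num

theorem detP_formula (n : ℕ) : (Pmat n).det = (-1 : R5) ^ n.choose 2 * Phi n n := by
  rw [Pmat_det_gam, sign_eq, gamPhi n n le_rfl]

theorem Pbig_target : ∀ n : ℕ, Pbig (n + 1) =
    ∏ m ∈ Icc 1 n, ∏ i ∈ Icc 1 m, (1 - av * xv ^ i * pqint xv yv (m - i + 1)) := by
  intro n
  induction n with
  | zero =>
      rw [Pbig_succ]
      have h0 : Pbig 0 = 1 := by
        unfold Pbig
        simp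
      have h1 : Dfac 1 = 1 := by
        unfold Dfac
        rw [Finset.Icc_self, Finset.prod_singleton, cp_self, sub_zero]
      rw [h0, h1]
      simp
  | succ n ih =>
      rw [Pbig_succ, ih, Finset.prod_Icc_succ_top (by omega : 1 ≤ n + 1)]
      congr 1
      unfold Dfac
      rw [Finset.prod_Icc_succ_top (by omega : 1 ≤ n + 2), cp_self, sub_zero, mul_one]
      apply Finset.prod_congr rfl
      intro i hi
      rw [Finset.mem_Icc] at hi
      rw [cp_def]
      have h3 : n + 2 - i = n + 1 - i + 1 := by omega
      rw [h3]
      rfl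

theorem Dfac_target (n : ℕ) : Dfac (n + 1) =
    ∏ i ∈ Icc 1 n, (1 - av * xv ^ i * pqint xv yv (n + 1 - i)) := by
  unfold Dfac
  rw [Finset.prod_Icc_succ_top (by omega : 1 ≤ n + 1), cp_self, sub_zero, mul_one]
  apply Finset.prod_congr rfl
  intro i _
  rfl

theorem part1 (n : ℕ) : (Pmat (n + 1)).det =
    (-1 : R5) ^ n * av * xv ^ n * pqint tv uv (n + 1) *
      (∏ i ∈ Finset.Icc 1 n, (1 - av * xv ^ i * pqint xv yv (n + 1 - i))) *
      (Pmat n).det := by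
  rw [detP_formula (n + 1), detP_formula n, ← Dfac_target]
  rw [Phi_def (n + 1) (n + 1), Phi_def n n, Bb_diag, Bb_diag, Nat.sub_self, Nat.sub_self]
  rw [tufact_succ, Pbig_succ, choose2_succ n]
  show (-1:R5) ^ (n.choose 2 + n) * _ = _
  rw [pow_add, pow_add]
  unfold pqt
  ring

theorem part2 (n : ℕ) (hn : 1 ≤ n) : (Pmat n).det =
    (-1 : R5) ^ n.choose 2 * av ^ n * xv ^ n.choose 2 * tufact n *
      ∏ m ∈ Finset.Icc 1 (n - 1), ∏ i ∈ Finset.Icc 1 m,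
        (1 - av * xv ^ i * pqint xv yv (m - i + 1)) := by
  obtain ⟨n', rfl⟩ : ∃ n', n = n' + 1 := ⟨n - 1, by omega⟩
  rw [detP_formula (n' + 1), Phi_def, Bb_diag, Nat.sub_self]
  rw [show n' + 1 - 1 = n' from rfl, ← Pbig_target n']
  rw [show Nat.choose 0 2 = 0 from rfl, pow_zero]
  ring

end S16

/-- `det P_n / det P_{n-1} = (-1)^{n-1} a x^{n-1} [n]_{t,u} ∏_{i=1}^{n-1}(1 - a x^i [n-i]_{x,y})`
(stated multiplicatively with `n+1` in place of `n`), and consequently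
`det P_n = (-1)^{C(n,2)} a^n x^{C(n,2)} [n]_{t,u}! ∏_{m=1}^{n-1} ∏_{i=1}^m (1 - a x^i [m-i+1]_{x,y})`. -/
theorem stmt16 :
    (∀ n : ℕ,
      (Pmat (n + 1)).det =
        (-1 : R5) ^ n * av * xv ^ n * pqint tv uv (n + 1) *
          (∏ i ∈ Finset.Icc 1 n, (1 - av * xv ^ i * pqint xv yv (n + 1 - i))) *
          (Pmat n).det) ∧
    (∀ n : ℕ, 1 ≤ n →
      (Pmat n).det =
        (-1 : R5) ^ n.choose 2 * av ^ n * xv ^ n.choose 2 * tufact n *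
          ∏ m ∈ Finset.Icc 1 (n - 1), ∏ i ∈ Finset.Icc 1 m,
            (1 - av * xv ^ i * pqint xv yv (m - i + 1))) :=
  ⟨S16.part1, S16.part2⟩
end
end

section
/- With N_n(x,a) as defined (F-weighted recursive matrix) and for 1 ≤ m ≤ n−1, 1 ≤ k ≤ n−m, the explicitly defined row vector X_n^{m,k}(x,a) is a left eigenvector: X_n^{m,k}(x,a) · N_n(x,a) = (x − a q^{k−1}[m]_q) · X_n^{m,k}(x,a). -/
noncomputable section

open Finset

variable {K : Type*} [Field K]

/-- The `q`-integer `[m]_q = 1 + q + ⋯ + q^{m-1}`. -/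
def qint (q : K) (m : ℕ) : K := ∑ j ∈ Finset.range m, q ^ j

/-- The `q`-factorial `[m]_q!`. -/
def qfact (q : K) (m : ℕ) : K := ∏ j ∈ Finset.Icc 1 m, qint q j

/-- `F`-factorial `F_m! = F_1 F_2 ⋯ F_m` (equal to `1` for `m = 0`). -/
def Ffact (F : ℕ → K) (m : ℕ) : K := ∏ j ∈ Finset.Icc 1 m, F j

/-- The lower-right block `N̂_n` of `N_{n+1}(x,a)`: the `(n+2)×(n+2)` matrix with (1-based)
entries `x δ_{ij} - a q^{i-1} [(n+2)-i]_q (δ_{ij} + δ_{i+1,j})`. -/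
def Nhat (x a q : K) (n : ℕ) : Matrix (Fin (n + 2)) (Fin (n + 2)) K := fun i j =>
  x * (if (i : ℕ) = (j : ℕ) then 1 else 0) -
    a * q ^ (i : ℕ) * qint q (n + 1 - (i : ℕ)) *
      ((if (i : ℕ) = (j : ℕ) then 1 else 0) + (if (i : ℕ) + 1 = (j : ℕ) then 1 else 0))

/-- The upper-right block `N̄_n` of `N_{n+1}(x,a)`: only its last `n+1` rows are nonzero,
and those form the `(n+1)×(n+2)` matrix with (1-based) entries
`-a F_{n+1} (δ_{ij} + δ_{i+1,j})`. -/
def Nbar (a : K) (F : ℕ → K) (n : ℕ) : Matrix (Fin (Nsz n)) (Fin (n + 2)) K := fun r j =>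
  if Nsz n ≤ (r : ℕ) + (n + 1) then
    -a * F (n + 1) *
      ((if (r : ℕ) - (Nsz n - (n + 1)) = (j : ℕ) then 1 else 0) +
        (if (r : ℕ) - (Nsz n - (n + 1)) + 1 = (j : ℕ) then 1 else 0))
  else 0

/-- The recursively defined matrix `N_n(x,a)`. -/
def Nmat (x a q : K) (F : ℕ → K) : (n : ℕ) → Matrix (Fin (Nsz n)) (Fin (Nsz n)) K
  | 0 => fun _ _ => x
  | n + 1 => fun p r =>
      Matrix.fromBlocks (Nmat x a q F n) (Nbar a F n) 0 (Nhat x a q n)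
        (finSumFinEquiv.symm p) (finSumFinEquiv.symm r)

/-- `Ṅ_n(x,a)`: the matrix `N_n(x,a)` with its last row and first column deleted. -/
def Ndot (x a q : K) (F : ℕ → K) (n : ℕ) :
    Matrix (Fin (Nsz n - 1)) (Fin (Nsz n - 1)) K := fun i j =>
  Nmat x a q F n ⟨(i : ℕ), lt_of_lt_of_le i.isLt (Nat.sub_le _ _)⟩
    ⟨(j : ℕ) + 1, by have := j.isLt; have := Nsz_pos n; omega⟩

/-- The `F`-binomial coefficient, vanishing out of range. -/
def Fbinom (F : ℕ → K) (n k : ℕ) : K :=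
  if k ≤ n then Ffact F n / (Ffact F k * Ffact F (n - k)) else 0

/-- The `q`-binomial coefficient, vanishing out of range. -/
def qbinom (q : K) (n k : ℕ) : K :=
  if k ≤ n then qfact q n / (qfact q k * qfact q (n - k)) else 0

/-- The entry of the vector `X_n^{m,k}(x,a)` in position `(i(i-1)/2 + j)` (1-based,
`1 ≤ i`, `1 ≤ j ≤ i`):
`(-1)^{i+m+k} a q^{-(m+k-1)(i-m-k) + C(j-k,2)} (F_{i-m-k}!/[i-m-k]_q!)
  · (i-1 choose m+k-1)_F · [m choose j-k]_q`,
with the conventions that `F_r! = [r]_q! = 1` for `r ≤ 0` and binomial coefficients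
vanish for out-of-range (in particular, negative) indices. -/
def Xentry (a q : K) (F : ℕ → K) (m k i j : ℕ) : K :=
  if j < k ∨ i < m + k then 0
  else
    (-1 : K) ^ (i + m + k) * a *
      q ^ ((((j - k).choose 2 : ℕ) : ℤ) - ((m : ℤ) + k - 1) * ((i : ℤ) - m - k)) *
      (Ffact F (i - m - k) / qfact q (i - m - k)) *
      Fbinom F (i - 1) (m + k - 1) * qbinom q m (j - k)

/-- The vector `X_n^{m,k}(x,a)`, laid out so that its last `n+1` entries correspond to
row index `i = n+1` and column indices `j = 1, …, n+1`. -/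
def Xvec (a q : K) (F : ℕ → K) (m k : ℕ) : (n : ℕ) → Fin (Nsz n) → K
  | 0 => fun _ => Xentry a q F m k 1 1
  | n + 1 => fun p =>
      Sum.elim (Xvec a q F m k n)
        (fun j : Fin (n + 2) => Xentry a q F m k (n + 2) ((j : ℕ) + 1))
        (finSumFinEquiv.symm p)

section Aux
variable {K : Type*} [Field K]

lemma qint_zero (q : K) : qint q 0 = 0 := by simp [qint]
lemma qint_one (q : K) : qint q 1 = 1 := by simp [qint]

lemma qint_add (q : K) (u s : ℕ) : qint q (u + s) = qint q u + q ^ u * qint q s := by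
  simp only [qint, Finset.sum_range_add, pow_add, Finset.mul_sum]

lemma qfact_zero (q : K) : qfact q 0 = 1 := by simp [qfact]

lemma qfact_succ (q : K) (s : ℕ) : qfact q (s + 1) = qfact q s * qint q (s + 1) :=
  Finset.prod_Icc_succ_top (by omega) _

lemma Ffact_zero (F : ℕ → K) : Ffact F 0 = 1 := by simp [Ffact]

lemma Ffact_succ (F : ℕ → K) (s : ℕ) : Ffact F (s + 1) = Ffact F s * F (s + 1) :=
  Finset.prod_Icc_succ_top (by omega) _

lemma qfact_ne_zero (q : K) (hqi : ∀ r : ℕ, 1 ≤ r → qint q r ≠ 0) (s : ℕ) :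
    qfact q s ≠ 0 := by
  induction s with
  | zero => simp [qfact_zero]
  | succ n ih => rw [qfact_succ]; exact mul_ne_zero ih (hqi _ (by omega))

lemma Ffact_ne_zero (F : ℕ → K) (hF : ∀ r : ℕ, 1 ≤ r → F r ≠ 0) (s : ℕ) :
    Ffact F s ≠ 0 := by
  induction s with
  | zero => simp [Ffact_zero]
  | succ n ih => rw [Ffact_succ]; exact mul_ne_zero ih (hF _ (by omega))

lemma qPascal (q : K) (hqi : ∀ r : ℕ, 1 ≤ r → qint q r ≠ 0) (t u : ℕ) :
    qint q (t + 1) * qbinom q (t + 1 + u) (t + 1) =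
      qint q (u + 1) * qbinom q (t + 1 + u) t := by
  rw [qbinom, if_pos (by omega), qbinom, if_pos (by omega)]
  rw [show t + 1 + u - (t + 1) = u from by omega, show t + 1 + u - t = u + 1 from by omega]
  rw [qfact_succ q t, qfact_succ q u]
  have h1 := qfact_ne_zero q hqi t
  have h2 := qfact_ne_zero q hqi u
  have h3 := hqi (t + 1) (by omega)
  have h4 := hqi (u + 1) (by omega)
  field_simp

end Aux
section Aux2
variable {K : Type*} [Field K]

lemma Xentry_zero_left (a q : K) (F : ℕ → K) {m k i j : ℕ} (h : j < k ∨ i < m + k) :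
    Xentry a q F m k i j = 0 := by rw [Xentry, if_pos h]

lemma qbinom_of_gt (q : K) {m t : ℕ} (h : m < t) : qbinom q m t = 0 := by
  rw [qbinom, if_neg (by omega)]

lemma Xentry_zero_right (a q : K) (F : ℕ → K) {m k i j : ℕ} (h : m + k < j) :
    Xentry a q F m k i j = 0 := by
  rw [Xentry]
  split
  · rfl
  · rw [qbinom_of_gt q (show m < j - k from by omega), mul_zero]

lemma Xentry_zero_of_row_lt (a q : K) (F : ℕ → K) {m k i j : ℕ} (h : i < j) :
    Xentry a q F m k i j = 0 := by
  rcases lt_or_ge i (m + k) with h' | h'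
  · exact Xentry_zero_left a q F (Or.inr h')
  · exact Xentry_zero_right a q F (by omega)

/-- Common prefactor of the entries of `X` in row `i = m+k+s`. -/
def XC (a q : K) (F : ℕ → K) (m k s : ℕ) : K :=
  (-1 : K) ^ s * a * (q ^ ((m + k - 1) * s))⁻¹ * (Ffact F s / qfact q s) *
    Fbinom F (m + k + s - 1) (m + k - 1)

lemma Xentry_formula (a q : K) (F : ℕ → K) {m k : ℕ} (hq : q ≠ 0)
    (hm : 1 ≤ m) (s t : ℕ) :
    Xentry a q F m k (m + k + s) (k + t) =
      XC a q F m k s * q ^ t.choose 2 * qbinom q m t := by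
  rw [Xentry, if_neg (by omega)]
  rw [show k + t - k = t from by omega, show m + k + s - m - k = s from by omega]
  have hsign : (-1 : K) ^ (m + k + s + m + k) = (-1 : K) ^ s := by
    rw [show m + k + s + m + k = s + 2 * (m + k) from by omega, pow_add, pow_mul,
      neg_one_sq, one_pow, mul_one]
  have hz : q ^ (((t.choose 2 : ℕ) : ℤ) - ((m : ℤ) + k - 1) * (((m + k + s : ℕ) : ℤ) - m - k)) =
      (q ^ ((m + k - 1) * s))⁻¹ * q ^ t.choose 2 := by
    have h1 : ((t.choose 2 : ℕ) : ℤ) - ((m : ℤ) + k - 1) * (((m + k + s : ℕ) : ℤ) - m - k) =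
        (t.choose 2 : ℤ) + (-(((m + k - 1) * s : ℕ) : ℤ)) := by
      push_cast [Nat.cast_sub (show 1 ≤ m + k from by omega)]
      ring
    rw [h1, zpow_add₀ hq, zpow_neg, zpow_natCast, zpow_natCast]
    ring
  rw [hsign, hz, XC]
  ring

end Aux2
section Aux3
variable {K : Type*} [Field K]

lemma XC_ratio (a q : K) (F : ℕ → K) {m k : ℕ} (hq : q ≠ 0)
    (hqi : ∀ r : ℕ, 1 ≤ r → qint q r ≠ 0) (hF : ∀ r : ℕ, 1 ≤ r → F r ≠ 0)
    (hm : 1 ≤ m) (hk : 1 ≤ k) (s : ℕ) :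
    F (m + k + s) * XC a q F m k s =
      -(q ^ (m + k - 1) * qint q (s + 1) * XC a q F m k (s + 1)) := by
  obtain ⟨m', rfl⟩ : ∃ m', m = m' + 1 := ⟨m - 1, by omega⟩
  rw [XC, XC]
  rw [show m' + 1 + k - 1 = m' + k from by omega,
    show m' + 1 + k + s - 1 = m' + k + s from by omega,
    show m' + 1 + k + (s + 1) - 1 = m' + k + s + 1 from by omega,
    show m' + 1 + k + s = m' + k + s + 1 from by omega]
  rw [Fbinom, if_pos (by omega), Fbinom, if_pos (by omega),
    show m' + k + s - (m' + k) = s from by omega,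
    show m' + k + s + 1 - (m' + k) = s + 1 from by omega]
  rw [Ffact_succ F (m' + k + s), Ffact_succ F s, qfact_succ q s,
    show (m' + k) * (s + 1) = (m' + k) * s + (m' + k) from by ring, pow_add, pow_succ]
  have h1 := qfact_ne_zero q hqi s
  have h2 := hqi (s + 1) (by omega)
  have h3 := Ffact_ne_zero F hF (m' + k)
  have h4 := Ffact_ne_zero F hF s
  have h5 := hF (s + 1) (by omega)
  have h6 : q ^ ((m' + k) * s) ≠ 0 := pow_ne_zero _ hq
  have h7 : q ^ (m' + k) ≠ 0 := pow_ne_zero _ hq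
  field_simp
  ring

lemma Xentry_ratio (a q : K) (F : ℕ → K) {m k : ℕ} (hq : q ≠ 0)
    (hqi : ∀ r : ℕ, 1 ≤ r → qint q r ≠ 0) (hF : ∀ r : ℕ, 1 ≤ r → F r ≠ 0)
    (hm : 1 ≤ m) (hk : 1 ≤ k) (s j : ℕ) :
    F (m + k + s) * Xentry a q F m k (m + k + s) j =
      -(q ^ (m + k - 1) * qint q (s + 1) * Xentry a q F m k (m + k + s + 1) j) := by
  rcases lt_or_ge j k with h | h
  · rw [Xentry_zero_left a q F (Or.inl h), Xentry_zero_left a q F (Or.inl h)]; ring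
  · obtain ⟨t, rfl⟩ : ∃ t, j = k + t := ⟨j - k, by omega⟩
    rw [show m + k + s + 1 = m + k + (s + 1) from by omega]
    rw [Xentry_formula a q F hq hm s t, Xentry_formula a q F hq hm (s + 1) t]
    linear_combination (q ^ t.choose 2 * qbinom q m t) *
      XC_ratio a q F hq hqi hF hm hk s

/-- version with natural subtraction covering `s = 0`. -/
lemma Xentry_ratio' (a q : K) (F : ℕ → K) {m k : ℕ} (hq : q ≠ 0)
    (hqi : ∀ r : ℕ, 1 ≤ r → qint q r ≠ 0) (hF : ∀ r : ℕ, 1 ≤ r → F r ≠ 0)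
    (hm : 1 ≤ m) (hk : 1 ≤ k) (s j : ℕ) :
    F (m + k + s - 1) * Xentry a q F m k (m + k + s - 1) j =
      -(q ^ (m + k - 1) * qint q s * Xentry a q F m k (m + k + s) j) := by
  cases s with
  | zero =>
    rw [Xentry_zero_left a q F (Or.inr (show m + k + 0 - 1 < m + k from by omega)),
      qint_zero]
    ring
  | succ s' =>
    rw [show m + k + (s' + 1) - 1 = m + k + s' from by omega,
      show m + k + (s' + 1) = m + k + s' + 1 from by omega]
    exact Xentry_ratio a q F hq hqi hF hm hk s' j

end Aux3
section Aux4
variable {K : Type*} [Field K]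

lemma keylem (a q : K) (F : ℕ → K) {m k : ℕ} (hq : q ≠ 0)
    (hqi : ∀ r : ℕ, 1 ≤ r → qint q r ≠ 0) (hF : ∀ r : ℕ, 1 ≤ r → F r ≠ 0)
    (hm : 1 ≤ m) (hk : 1 ≤ k) (i j : ℕ) :
    q ^ (j - 1) * qint q (i - j) * Xentry a q F m k i j
      + q ^ (j - 2) * qint q (i + 1 - j) * Xentry a q F m k i (j - 1)
      + F (i - 1) * (Xentry a q F m k (i - 1) j + Xentry a q F m k (i - 1) (j - 1))
      = q ^ (k - 1) * qint q m * Xentry a q F m k i j := by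
  rcases lt_or_ge i (m + k) with hi | hi
  · rw [Xentry_zero_left a q F (j := j) (Or.inr hi),
      Xentry_zero_left a q F (j := j - 1) (Or.inr hi),
      Xentry_zero_left a q F (i := i - 1) (j := j)
        (Or.inr (show i - 1 < m + k from by omega)),
      Xentry_zero_left a q F (i := i - 1) (j := j - 1)
        (Or.inr (show i - 1 < m + k from by omega))]
    ring
  · obtain ⟨s, rfl⟩ : ∃ s, i = m + k + s := ⟨i - (m + k), by omega⟩
    rcases lt_or_ge j k with hjk | hjk
    · rw [Xentry_zero_left a q F (Or.inl hjk),
        Xentry_zero_left a q F (Or.inl (show j - 1 < k from by omega)),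
        Xentry_zero_left a q F (Or.inl hjk),
        Xentry_zero_left a q F (Or.inl (show j - 1 < k from by omega))]
      ring
    · obtain ⟨t, rfl⟩ : ∃ t, j = k + t := ⟨j - k, by omega⟩
      rw [mul_add, Xentry_ratio' a q F hq hqi hF hm hk s (k + t),
        Xentry_ratio' a q F hq hqi hF hm hk s (k + t - 1)]
      cases t with
      | zero =>
        rw [Xentry_zero_left a q F (Or.inl (show k + 0 - 1 < k from by omega))]
        rw [show m + k + s - (k + 0) = m + s from by omega, qint_add q m s,
          show m + k - 1 = k - 1 + m from by omega, pow_add]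
        ring
      | succ t' =>
        by_cases htm : t' + 1 ≤ m
        · obtain ⟨u, rfl⟩ : ∃ u, m = t' + 1 + u := ⟨m - (t' + 1), by omega⟩
          obtain ⟨k', rfl⟩ : ∃ k', k = k' + 1 := ⟨k - 1, by omega⟩
          rw [show k' + 1 + (t' + 1) - 1 = k' + 1 + t' from by omega,
            show k' + 1 + (t' + 1) - 2 = k' + t' from by omega,
            show t' + 1 + u + (k' + 1) + s - (k' + 1 + (t' + 1)) = u + s from by omega,
            show t' + 1 + u + (k' + 1) + s + 1 - (k' + 1 + (t' + 1)) = u + (1 + s) from by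
              omega,
            show t' + 1 + u + (k' + 1) - 1 = k' + t' + 1 + u from by omega,
            show k' + 1 - 1 = k' from by omega]
          rw [Xentry_formula a q F hq (show 1 ≤ t' + 1 + u from by omega) s (t' + 1),
            Xentry_formula a q F hq (show 1 ≤ t' + 1 + u from by omega) s t']
          rw [show (t' + 1).choose 2 = t'.choose 2 + t' from by
              rw [Nat.choose_succ_succ, Nat.choose_one_right, Nat.add_comm]]
          rw [qint_add q u s, qint_add q u (1 + s), qint_add q 1 s, qint_one,
            qint_add q (t' + 1) u]
          have hP := qPascal q hqi t' u
          rw [qint_add q u 1, qint_one] at hP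
          linear_combination
            (-(XC a q F (t' + 1 + u) (k' + 1) s * q ^ t'.choose 2 * q ^ (k' + t'))) * hP
        · rw [Xentry_zero_right a q F (show m + k < k + (t' + 1) from by omega),
            show k + (t' + 1) - 1 = k + t' from by omega]
          rcases Nat.lt_or_ge t' m with h2 | h2
          · -- then t' = m is impossible? htm : m < t'+1 i.e. m ≤ t'; with h2 : t' < m contradiction
            omega
          · rcases Nat.eq_or_lt_of_le h2 with h3 | h3
            · subst h3
              rw [show k + (m + 1) - 2 = m + k - 1 from by omega,
                show m + k + s + 1 - (k + (m + 1)) = s from by omega]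
              ring
            · rw [Xentry_zero_right a q F (show m + k < k + t' from by omega)]
              ring

end Aux4
section Aux5
variable {K : Type*} [Field K]

lemma delta1 {N : ℕ} (w : Fin N → K) (v0 : ℕ) :
    (∑ d : Fin N, w d * (if (d : ℕ) = v0 then 1 else 0)) =
      if h : v0 < N then w ⟨v0, h⟩ else 0 := by
  split_ifs with h
  · rw [Finset.sum_eq_single (⟨v0, h⟩ : Fin N)]
    · rw [if_pos rfl, mul_one]
    · intro b _ hb
      rw [if_neg (by simpa [Fin.ext_iff] using hb), mul_zero]
    · intro hb; exact absurd (Finset.mem_univ _) hb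
  · apply Finset.sum_eq_zero
    intro b _
    have := b.isLt
    rw [if_neg (by omega), mul_zero]

lemma delta2 {N : ℕ} (w : Fin N → K) (v0 : ℕ) :
    (∑ d : Fin N, w d * (if (d : ℕ) + 1 = v0 then 1 else 0)) =
      if h : 1 ≤ v0 ∧ v0 - 1 < N then w ⟨v0 - 1, h.2⟩ else 0 := by
  split_ifs with h
  · rw [Finset.sum_eq_single (⟨v0 - 1, h.2⟩ : Fin N)]
    · rw [if_pos (by simp; omega), mul_one]
    · intro b _ hb
      have : (b : ℕ) ≠ v0 - 1 := by simpa [Fin.ext_iff] using hb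
      rw [if_neg (by omega), mul_zero]
    · intro hb; exact absurd (Finset.mem_univ _) hb
  · apply Finset.sum_eq_zero
    intro b _
    have := b.isLt
    rw [if_neg (by omega), mul_zero]

lemma vecMul_NhatX (x a q : K) (F : ℕ → K) {m k : ℕ} (hk : 1 ≤ k)
    (n : ℕ) (c : Fin (n + 2)) :
    Matrix.vecMul (fun d : Fin (n + 2) => Xentry a q F m k (n + 2) ((d : ℕ) + 1)) (Nhat x a q n) c =
      x * Xentry a q F m k (n + 2) ((c : ℕ) + 1)
        - a * q ^ (c : ℕ) * qint q (n + 1 - (c : ℕ)) * Xentry a q F m k (n + 2) ((c : ℕ) + 1)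
        - a * q ^ ((c : ℕ) - 1) * qint q (n + 2 - (c : ℕ)) *
            Xentry a q F m k (n + 2) (c : ℕ) := by
  have step : ∀ d : Fin (n + 2),
      Xentry a q F m k (n + 2) ((d : ℕ) + 1) * Nhat x a q n d c =
        (Xentry a q F m k (n + 2) ((d : ℕ) + 1) * x) *
            (if (d : ℕ) = (c : ℕ) then 1 else 0)
          - ((Xentry a q F m k (n + 2) ((d : ℕ) + 1) *
                (a * q ^ (d : ℕ) * qint q (n + 1 - (d : ℕ)))) *
                (if (d : ℕ) = (c : ℕ) then 1 else 0)
              + (Xentry a q F m k (n + 2) ((d : ℕ) + 1) *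
                  (a * q ^ (d : ℕ) * qint q (n + 1 - (d : ℕ)))) *
                (if (d : ℕ) + 1 = (c : ℕ) then 1 else 0)) := by
    intro d; rw [Nhat]; ring
  show (∑ d : Fin (n + 2), Xentry a q F m k (n + 2) ((d : ℕ) + 1) * Nhat x a q n d c) = _
  rw [Finset.sum_congr rfl fun d _ => step d, Finset.sum_sub_distrib,
    Finset.sum_add_distrib, delta1, delta1, delta2]
  rw [dif_pos c.isLt, dif_pos c.isLt]
  by_cases hc : 1 ≤ (c : ℕ)
  · rw [dif_pos ⟨hc, by omega⟩, show (c : ℕ) - 1 + 1 = (c : ℕ) from by omega,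
      show n + 1 - ((c : ℕ) - 1) = n + 2 - (c : ℕ) from by omega]
    ring
  · have hc0 : (c : ℕ) = 0 := by omega
    rw [dif_neg (by omega), hc0,
      Xentry_zero_left a q F (i := n + 2) (j := 0) (Or.inl (by omega))]
    ring

lemma vecMul_NbarX (a q : K) (F : ℕ → K) {m k : ℕ} (hm : 1 ≤ m) (hk : 1 ≤ k)
    (n : ℕ) (c : Fin (n + 2)) :
    Matrix.vecMul (Xvec a q F m k n) (Nbar a F n) c =
      -a * F (n + 1) *
        (Xentry a q F m k (n + 1) ((c : ℕ) + 1) + Xentry a q F m k (n + 1) (c : ℕ)) := by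
  cases n with
  | zero =>
    show (∑ r : Fin (Nsz 0), Xvec a q F m k 0 r * Nbar a F 0 r c) = _
    rw [Finset.sum_eq_single (⟨0, Nsz_pos 0⟩ : Fin (Nsz 0))]
    · have h1 : Xvec a q F m k 0 ⟨0, Nsz_pos 0⟩ = Xentry a q F m k 1 1 := rfl
      have h2 : Nbar a F 0 ⟨0, Nsz_pos 0⟩ c =
          -a * F 1 * ((if 0 = (c : ℕ) then 1 else 0) + (if 1 = (c : ℕ) then 1 else 0)) := by
        rw [Nbar, if_pos (by simp [Nsz])]
        simp [Nsz]
      rw [h1, h2]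
      rcases (by omega : (c : ℕ) = 0 ∨ (c : ℕ) = 1) with hc | hc <;> rw [hc]
      · rw [Xentry_zero_left a q F (i := 1) (j := 0) (Or.inl (by omega))]
        norm_num
        ring
      · rw [Xentry_zero_of_row_lt a q F (i := 1) (j := 2) (by omega)]
        norm_num
        ring
    · intro b _ hb
      have hblt : (b : ℕ) < 1 := b.isLt
      exact absurd (Fin.ext (by simp <;> omega)) hb
    · intro hb; exact absurd (Finset.mem_univ _) hb
  | succ n =>
    have hc3 : (c : ℕ) < n + 3 := c.isLt
    show (∑ r : Fin (Nsz (n + 1)), Xvec a q F m k (n + 1) r * Nbar a F (n + 1) r c) = _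
    rw [show (∑ r : Fin (Nsz (n + 1)), Xvec a q F m k (n + 1) r * Nbar a F (n + 1) r c) =
        ∑ z : Fin (Nsz n) ⊕ Fin (n + 2), Xvec a q F m k (n + 1) (finSumFinEquiv z) *
          Nbar a F (n + 1) (finSumFinEquiv z) c from
        (Equiv.sum_comp finSumFinEquiv _).symm,
      Fintype.sum_sum_type]
    have hinl : ∀ r : Fin (Nsz n),
        Xvec a q F m k (n + 1) (finSumFinEquiv (Sum.inl r)) *
          Nbar a F (n + 1) (finSumFinEquiv (Sum.inl r)) c = 0 := by
      intro r
      have hr : (r : ℕ) < Nsz n := r.isLt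
      have : Nbar a F (n + 1) (finSumFinEquiv (Sum.inl r)) c = 0 := by
        unfold Nbar
        rw [if_neg (by simp [Nsz] <;> omega)]
      rw [this, mul_zero]
    rw [Finset.sum_congr rfl fun r _ => hinl r, Finset.sum_const_zero, zero_add]
    have hinr : ∀ d : Fin (n + 2),
        Xvec a q F m k (n + 1) (finSumFinEquiv (Sum.inr d)) *
          Nbar a F (n + 1) (finSumFinEquiv (Sum.inr d)) c =
          (Xentry a q F m k (n + 2) ((d : ℕ) + 1) * (-a * F (n + 2))) *
              (if (d : ℕ) = (c : ℕ) then 1 else 0)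
            + (Xentry a q F m k (n + 2) ((d : ℕ) + 1) * (-a * F (n + 2))) *
              (if (d : ℕ) + 1 = (c : ℕ) then 1 else 0) := by
      intro d
      have h1 : Xvec a q F m k (n + 1) (finSumFinEquiv (Sum.inr d)) =
          Xentry a q F m k (n + 2) ((d : ℕ) + 1) := by
        show Sum.elim _ _ (finSumFinEquiv.symm (finSumFinEquiv (Sum.inr d))) = _
        rw [Equiv.symm_apply_apply]
        rfl
      have h2 : Nbar a F (n + 1) (finSumFinEquiv (Sum.inr d)) c =
          -a * F (n + 2) *
            ((if (d : ℕ) = (c : ℕ) then 1 else 0) +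
              (if (d : ℕ) + 1 = (c : ℕ) then 1 else 0)) := by
        have hco : (finSumFinEquiv (Sum.inr d) : Fin (Nsz n + (n + 2))) =
            Fin.natAdd (Nsz n) d := rfl
        unfold Nbar
        rw [hco, if_pos (by simp [Fin.natAdd, Nsz] <;> omega)]
        have hidx : (Fin.natAdd (Nsz n) d : ℕ) - (Nsz (n + 1) - (n + 2)) = (d : ℕ) := by
          simp [Fin.natAdd, Nsz]
        rw [hidx]
      rw [h1, h2]; ring
    rw [Finset.sum_congr rfl fun d _ => hinr d, Finset.sum_add_distrib, delta1, delta2]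
    by_cases hlt : (c : ℕ) < n + 2
    · rw [dif_pos hlt]
      by_cases hc : 1 ≤ (c : ℕ)
      · rw [dif_pos ⟨hc, by omega⟩, show (c : ℕ) - 1 + 1 = (c : ℕ) from by omega]
        ring
      · rw [dif_neg (by omega), show (c : ℕ) = 0 from by omega,
          Xentry_zero_left a q F (i := n + 2) (j := 0) (Or.inl (by omega))]
        ring
    · have hc2 : (c : ℕ) = n + 2 := by omega
      rw [dif_neg (by omega), dif_pos ⟨by omega, by omega⟩,
        show (c : ℕ) - 1 + 1 = (c : ℕ) from by omega,
        Xentry_zero_of_row_lt a q F (i := n + 2) (j := (c : ℕ) + 1) (by omega)]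
      ring

end Aux5
section Aux6
variable {K : Type*} [Field K]

lemma step2 (x a q : K) (F : ℕ → K) {m k : ℕ} (hq : q ≠ 0)
    (hqi : ∀ r : ℕ, 1 ≤ r → qint q r ≠ 0) (hF : ∀ r : ℕ, 1 ≤ r → F r ≠ 0)
    (hm : 1 ≤ m) (hk : 1 ≤ k) (n c : ℕ) :
    -a * F (n + 1) * (Xentry a q F m k (n + 1) (c + 1) + Xentry a q F m k (n + 1) c)
      + (x * Xentry a q F m k (n + 2) (c + 1)
        - a * q ^ c * qint q (n + 1 - c) * Xentry a q F m k (n + 2) (c + 1)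
        - a * q ^ (c - 1) * qint q (n + 2 - c) * Xentry a q F m k (n + 2) c)
      = (x - a * q ^ (k - 1) * qint q m) * Xentry a q F m k (n + 2) (c + 1) := by
  have h := keylem a q F hq hqi hF hm hk (n + 2) (c + 1)
  rw [show n + 2 - (c + 1) = n + 1 - c from by omega,
    show n + 2 + 1 - (c + 1) = n + 2 - c from by omega,
    show c + 1 - 1 = c from by omega,
    show c + 1 - 2 = c - 1 from by omega,
    show n + 2 - 1 = n + 1 from by omega] at h
  linear_combination (-a) * h

lemma mainlem (x a q : K) (F : ℕ → K) (hq : q ≠ 0)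
    (hqi : ∀ r : ℕ, 1 ≤ r → qint q r ≠ 0) (hF : ∀ r : ℕ, 1 ≤ r → F r ≠ 0)
    (m k : ℕ) (hm : 1 ≤ m) (hk : 1 ≤ k) (n : ℕ) :
    Matrix.vecMul (Xvec a q F m k n) (Nmat x a q F n) =
      (x - a * q ^ (k - 1) * qint q m) • Xvec a q F m k n := by
  induction n with
  | zero =>
    funext p
    have hz : Xentry a q F m k 1 1 = 0 :=
      Xentry_zero_left a q F (Or.inr (by omega))
    show (∑ r : Fin (Nsz 0), Xvec a q F m k 0 r * Nmat x a q F 0 r p) = _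
    rw [Finset.sum_eq_zero (fun r _ => by
      show Xentry a q F m k 1 1 * _ = 0
      rw [hz, zero_mul])]
    rw [Pi.smul_apply, smul_eq_mul, show Xvec a q F m k 0 p = 0 from hz, mul_zero]
  | succ n ih =>
    funext p
    have hL : Matrix.vecMul (Xvec a q F m k (n + 1)) (Nmat x a q F (n + 1)) p =
        Matrix.vecMul
          (Sum.elim (Xvec a q F m k n)
            (fun j : Fin (n + 2) => Xentry a q F m k (n + 2) ((j : ℕ) + 1)))
          (Matrix.fromBlocks (Nmat x a q F n) (Nbar a F n) 0 (Nhat x a q n))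
          (finSumFinEquiv.symm p) := by
      show (∑ r : Fin (Nsz (n + 1)),
          Xvec a q F m k (n + 1) r * Nmat x a q F (n + 1) r p) = _
      rw [show (∑ r : Fin (Nsz (n + 1)),
            Xvec a q F m k (n + 1) r * Nmat x a q F (n + 1) r p)
          = ∑ z : Fin (Nsz n) ⊕ Fin (n + 2),
              Xvec a q F m k (n + 1) (finSumFinEquiv z) *
                Nmat x a q F (n + 1) (finSumFinEquiv z) p from
          (Equiv.sum_comp finSumFinEquiv _).symm]
      apply Finset.sum_congr rfl
      intro z _
      congr 1
      · show Sum.elim _ _ (finSumFinEquiv.symm (finSumFinEquiv z)) = _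
        rw [Equiv.symm_apply_apply]
      · show Matrix.fromBlocks _ _ _ _ (finSumFinEquiv.symm (finSumFinEquiv z))
            (finSumFinEquiv.symm p) = _
        rw [Equiv.symm_apply_apply]
    rw [hL, Matrix.vecMul_fromBlocks, Sum.elim_comp_inl, Sum.elim_comp_inr]
    have hR : ((x - a * q ^ (k - 1) * qint q m) • Xvec a q F m k (n + 1)) p =
        (x - a * q ^ (k - 1) * qint q m) *
          Sum.elim (Xvec a q F m k n)
            (fun j : Fin (n + 2) => Xentry a q F m k (n + 2) ((j : ℕ) + 1))
            (finSumFinEquiv.symm p) := rfl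
    rw [hR]
    rcases hzz : finSumFinEquiv.symm p with r | d
    · rw [Sum.elim_inl, Sum.elim_inl, Pi.add_apply, Matrix.vecMul_zero, Pi.zero_apply,
        add_zero]
      have := congrFun ih r
      rw [Pi.smul_apply, smul_eq_mul] at this
      exact this
    · rw [Sum.elim_inr, Sum.elim_inr, Pi.add_apply,
        vecMul_NbarX a q F hm hk n d, vecMul_NhatX x a q F hk n d]
      exact step2 x a q F hq hqi hF hm hk n (d : ℕ)

end Aux6
/-- For `1 ≤ m ≤ n-1` and `1 ≤ k ≤ n-m`, the vector `X_n^{m,k}(x,a)` is a left eigenvector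
of `N_n(x,a)`: `X_n^{m,k}(x,a) · N_n(x,a) = (x - a q^{k-1} [m]_q) X_n^{m,k}(x,a)`. -/
theorem stmt18 {K : Type*} [Field K] (x a q : K) (F : ℕ → K)
    (hq : q ≠ 0) (hqi : ∀ r : ℕ, 1 ≤ r → qint q r ≠ 0) (hF : ∀ r : ℕ, 1 ≤ r → F r ≠ 0)
    (n m k : ℕ) (hm : 1 ≤ m) (hk : 1 ≤ k) (hmk : m + k ≤ n) :
    Matrix.vecMul (Xvec a q F m k n) (Nmat x a q F n) =
      (x - a * q ^ (k - 1) * qint q m) • Xvec a q F m k n :=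
  mainlem x a q F hq hqi hF m k hm hk n
end
end
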